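/- With the notation above, the positive root u(y) of c₂(y)u² + c₁(y)u + c₀ = 0 is a strictly increasing function of y on [0,∞), and u(y) → (N-1)/(N-2n-1) as y → ∞. -/

import Mathlib

/-- `tanh'(y)`. -/
noncomputable def tanhD (y : ℝ) : ℝ := deriv Real.tanh y

/-- The coefficient `c₂(y)` of the quadratic for `u`. -/
noncomputable def c2 (N n y : ℝ) : ℝ := (n + 1 + (n - 1) / (N - 2 * n)) * tanhD y

/-- The coefficient `c₁(y)` of the quadratic for `u`. -/
noncomputable def c1 (N n y : ℝ) : ℝ :=
  (N - 2 * n - 1) * (N - n - 1) / (N - 2 * n) + (N - 1) * (n - 1) * tanhD y / (N - 2 * n)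

/-- The constant coefficient `c₀`. -/
noncomputable def c0 (N n : ℝ) : ℝ := -((N - n - 1) * (N - 1) / (N - 2 * n))

/-- The positive root `u(y)` of `c₂u² + c₁u + c₀ = 0`. -/
noncomputable def uRoot (N n y : ℝ) : ℝ :=
  (-(c1 N n y) + Real.sqrt ((c1 N n y) ^ 2 - 4 * c2 N n y * c0 N n)) / (2 * c2 N n y)

/-- The quantity `c(y)` from the cubic reduction. -/
noncomputable def cFun (N n y : ℝ) : ℝ :=
  (n - 1) / (N - 2 * n) * tanhD y - (N - n - 1) / ((N - 2 * n) * uRoot N n y)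

/-- The quantity `a(y)` from the cubic reduction. -/
noncomputable def aFun (N n y : ℝ) : ℝ :=
  (n - 1) / (N - 2 * n) * iteratedDeriv 3 Real.tanh y / 6

/-- The quantity `b(y)` from the cubic reduction. -/
noncomputable def bFun (N n y : ℝ) : ℝ :=
  (n - 1) / (N - 2 * n) * iteratedDeriv 2 Real.tanh y / 2

/-- The cubic coefficient `λ₃(y, N, n)` at the bifurcation. -/
noncomputable def lam3 (N n y : ℝ) : ℝ :=
  -(N - 1) / 3 + n * (N - n - 1) / (n - 1) *
    (2 * aFun N n y * cFun N n y - 4 * (bFun N n y) ^ 2) / (cFun N n y) ^ 5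



open Real Filter Set

private lemma tanhD_eq (y : ℝ) : tanhD y = 1 / Real.cosh y ^ 2 := by
  have h := ((Real.hasDerivAt_sinh y).div (Real.hasDerivAt_cosh y) (ne_of_gt (Real.cosh_pos y)))
  have heq : (Real.cosh y * Real.cosh y - Real.sinh y * Real.sinh y) / Real.cosh y ^ 2
      = 1 / Real.cosh y ^ 2 := by
    rw [show Real.cosh y * Real.cosh y - Real.sinh y * Real.sinh y
        = Real.cosh y ^ 2 - Real.sinh y ^ 2 by ring, Real.cosh_sq_sub_sinh_sq]
  have h2 : HasDerivAt Real.tanh (1 / Real.cosh y ^ 2) y := by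
    rw [← heq]
    exact h.congr_of_eventuallyEq (by filter_upwards with x; rw [Real.tanh_eq_sinh_div_cosh, Pi.div_apply])
  exact h2.deriv

private lemma tanhD_pos (y : ℝ) : 0 < tanhD y := by
  rw [tanhD_eq]; positivity

private lemma tanhD_anti : StrictAntiOn tanhD (Set.Ici (0:ℝ)) := by
  intro a ha b hb hab
  rw [tanhD_eq, tanhD_eq]
  have hc : Real.cosh a < Real.cosh b := by
    rw [Real.cosh_lt_cosh, abs_of_nonneg ha, abs_of_nonneg (le_of_lt (lt_of_le_of_lt ha hab))]
    exact hab
  have h1 : (0:ℝ) < Real.cosh a ^ 2 := by positivity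
  have h2 : Real.cosh a ^ 2 < Real.cosh b ^ 2 := by
    nlinarith [Real.cosh_pos a, Real.cosh_pos b]
  exact one_div_lt_one_div_of_lt h1 h2

private lemma tanhD_tendsto : Filter.Tendsto tanhD Filter.atTop (nhds 0) := by
  have hcosh : Filter.Tendsto Real.cosh Filter.atTop Filter.atTop := by
    apply Filter.tendsto_atTop_mono (fun y => ?_) (Real.tendsto_exp_atTop.atTop_div_const two_pos)
    rw [Real.cosh_eq]
    have := Real.exp_pos (-y)
    linarith
  have hsq : Filter.Tendsto (fun y => Real.cosh y ^ 2) Filter.atTop Filter.atTop :=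
    hcosh.atTop_mul_atTop₀ hcosh |>.congr (by intro x; ring)
  have h := Filter.Tendsto.comp tendsto_inv_atTop_zero hsq
  apply h.congr (fun y => ?_)
  rw [tanhD_eq, one_div, Function.comp]

private lemma key_anti (A B C D : ℝ) (hB : 0 < B) (hC : 0 < C) (hA : 0 < A) (hD : 0 < D) :
    StrictAntiOn (fun t : ℝ => 2 * D / ((B + C * t) + Real.sqrt ((B + C * t) ^ 2 + 4 * A * D * t)))
      (Set.Ici (0:ℝ)) := by
  intro a ha b hb hab
  simp only
  have ha' : (0:ℝ) ≤ a := ha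
  have hb' : (0:ℝ) ≤ b := hb
  have hBa : 0 < B + C * a := by nlinarith
  have hBb : 0 < B + C * b := by nlinarith
  have hBab : B + C * a < B + C * b := by nlinarith
  have harg : (B + C * a) ^ 2 + 4 * A * D * a < (B + C * b) ^ 2 + 4 * A * D * b := by
    nlinarith [mul_self_lt_mul_self hBa.le hBab,
      mul_lt_mul_of_pos_left hab (by positivity : (0:ℝ) < 4 * A * D)]
  have hs : Real.sqrt ((B + C * a) ^ 2 + 4 * A * D * a)
      ≤ Real.sqrt ((B + C * b) ^ 2 + 4 * A * D * b) := Real.sqrt_le_sqrt harg.le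
  have hda : 0 < (B + C * a) + Real.sqrt ((B + C * a) ^ 2 + 4 * A * D * a) := by
    have := Real.sqrt_nonneg ((B + C * a) ^ 2 + 4 * A * D * a); linarith
  apply div_lt_div_of_pos_left (by linarith) hda (by linarith)

private lemma key_eq (A B C D t : ℝ) (hA : 0 < A) (hB : 0 < B) (hCt : 0 ≤ C * t)
    (hD : 0 < D) (ht : 0 < t) :
    (-(B + C * t) + Real.sqrt ((B + C * t) ^ 2 + 4 * A * D * t)) / (2 * (A * t))
      = 2 * D / ((B + C * t) + Real.sqrt ((B + C * t) ^ 2 + 4 * A * D * t)) := by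
  set s := Real.sqrt ((B + C * t) ^ 2 + 4 * A * D * t) with hsdef
  have harg : (0:ℝ) ≤ (B + C * t) ^ 2 + 4 * A * D * t := by positivity
  have hs2 : s ^ 2 = (B + C * t) ^ 2 + 4 * A * D * t := Real.sq_sqrt harg
  have hsnn : 0 ≤ s := Real.sqrt_nonneg _
  have hBC : 0 < B + C * t := by linarith
  have hslt : B + C * t < s := by nlinarith [mul_pos (mul_pos (mul_pos four_pos hA) hD) ht]
  rw [div_eq_div_iff (by positivity) (by linarith)]
  linear_combination hs2

/-- The positive root `u(y)` is strictly increasing on `[0,∞)` and tends to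
`(N-1)/(N-2n-1)` as `y → ∞`. -/
theorem stmt_6 (N n : ℤ) (hn : 2 ≤ n) (hnN : 2 * n + 1 < N) :
    StrictMonoOn (fun y : ℝ => uRoot (N : ℝ) (n : ℝ) y) (Set.Ici (0 : ℝ)) ∧
    Filter.Tendsto (fun y : ℝ => uRoot (N : ℝ) (n : ℝ) y) Filter.atTop
      (nhds (((N : ℝ) - 1) / ((N : ℝ) - 2 * (n : ℝ) - 1))) := by
  have hn' : (2:ℝ) ≤ (n:ℝ) := by exact_mod_cast hn
  have hN' : 2 * (n:ℝ) + 1 < (N:ℝ) := by exact_mod_cast hnN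
  have hM : (0:ℝ) < (N:ℝ) - 2 * (n:ℝ) := by linarith
  have hM1 : (0:ℝ) < (N:ℝ) - 2 * (n:ℝ) - 1 := by linarith
  have hNn1 : (0:ℝ) < (N:ℝ) - (n:ℝ) - 1 := by linarith
  have hN1 : (0:ℝ) < (N:ℝ) - 1 := by linarith
  set A : ℝ := (n:ℝ) + 1 + ((n:ℝ) - 1) / ((N:ℝ) - 2 * (n:ℝ)) with hAdef
  set B : ℝ := ((N:ℝ) - 2 * (n:ℝ) - 1) * ((N:ℝ) - (n:ℝ) - 1) / ((N:ℝ) - 2 * (n:ℝ)) with hBdef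
  set C : ℝ := ((N:ℝ) - 1) * ((n:ℝ) - 1) / ((N:ℝ) - 2 * (n:ℝ)) with hCdef
  set D : ℝ := ((N:ℝ) - (n:ℝ) - 1) * ((N:ℝ) - 1) / ((N:ℝ) - 2 * (n:ℝ)) with hDdef
  have hA : 0 < A := by
    have : 0 < ((n:ℝ) - 1) / ((N:ℝ) - 2 * (n:ℝ)) := div_pos (by linarith) hM
    rw [hAdef]; linarith
  have hB : 0 < B := div_pos (mul_pos hM1 hNn1) hM
  have hC : 0 < C := div_pos (mul_pos hN1 (by linarith)) hM
  have hD : 0 < D := div_pos (mul_pos hNn1 hN1) hM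
  have huR : ∀ y : ℝ, uRoot (N:ℝ) (n:ℝ) y
      = 2 * D / ((B + C * tanhD y) + Real.sqrt ((B + C * tanhD y) ^ 2 + 4 * A * D * tanhD y)) := by
    intro y
    have ht := tanhD_pos y
    have e1 : c1 (N:ℝ) (n:ℝ) y = B + C * tanhD y := by rw [c1, hBdef, hCdef]; ring
    have e2 : c2 (N:ℝ) (n:ℝ) y = A * tanhD y := by rw [c2, hAdef]
    have e3 : c0 (N:ℝ) (n:ℝ) = -D := by rw [c0, hDdef]
    rw [uRoot, e1, e2, e3,
      show (B + C * tanhD y) ^ 2 - 4 * (A * tanhD y) * (-D)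
        = (B + C * tanhD y) ^ 2 + 4 * A * D * tanhD y from by ring]
    exact key_eq A B C D (tanhD y) hA hB (le_of_lt (mul_pos hC ht)) hD ht
  constructor
  · intro y1 hy1 y2 hy2 h12
    simp only
    rw [huR y1, huR y2]
    exact key_anti A B C D hB hC hA hD (Set.mem_Ici.mpr (tanhD_pos y2).le)
      (Set.mem_Ici.mpr (tanhD_pos y1).le) (tanhD_anti hy1 hy2 h12)
  · have hdc : Continuous (fun t : ℝ => (B + C * t) + Real.sqrt ((B + C * t) ^ 2 + 4 * A * D * t)) := by
      apply Continuous.add (by continuity)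
      exact Real.continuous_sqrt.comp (by continuity)
    have hval0 : B + C * 0 + Real.sqrt ((B + C * 0) ^ 2 + 4 * A * D * 0)
        = 2 * B := by
      simp [Real.sqrt_sq hB.le]; ring
    have hden := hdc.continuousAt (x := (0:ℝ))
    rw [ContinuousAt, hval0] at hden
    have hTg : Filter.Tendsto
        (fun t : ℝ => 2 * D / ((B + C * t) + Real.sqrt ((B + C * t) ^ 2 + 4 * A * D * t)))
        (nhds 0) (nhds ((2 * D) / (2 * B))) :=
      tendsto_const_nhds.div hden (by positivity)
    have hvv : (2 * D) / (2 * B) = ((N:ℝ) - 1) / ((N:ℝ) - 2 * (n:ℝ) - 1) := by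
      rw [hDdef, hBdef]
      field_simp
    rw [hvv] at hTg
    have hcomp := hTg.comp tanhD_tendsto
    exact hcomp.congr (fun y => (huR y).symm)
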